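/- Let n ≥ 2 and let c_* ∈ ℝ \ {0}. For every i = 1, 2, …, n, the linear map Φ_i : ℝⁿ × ℝ^{n_*−n} → Sym_n defined by Φ_i(α, β) = c_* α ⊙ ξ_i + Σ_{j=n+1}^{n_*} β_{j−n} ξ_j ⊗ ξ_j is a linear isomorphism, where α ⊙ ξ_i := (1/2)(α ⊗ ξ_i + ξ_i ⊗ α). -/
import Mathlib


open MeasureTheory

attribute [local instance] Matrix.normedAddCommGroup Matrix.normedSpace

noncomputable section

/-- Index set for the vectors `ξ_1, …, ξ_{n_*}`: pairs `(i, j)` with `i ≤ j`. -/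
abbrev PairIdx (n : ℕ) := {p : Fin n × Fin n // p.1 ≤ p.2}

/-- The unit vectors `ξ = (e_i + e_j)/|e_i + e_j|` for `i ≤ j`; in particular `ξ = e_i`
for the diagonal pairs. -/
def xiVec {n : ℕ} (p : PairIdx n) : Fin n → ℝ :=
  if p.1.1 = p.1.2 then Pi.single p.1.1 1
  else (Real.sqrt 2)⁻¹ • (Pi.single p.1.1 (1 : ℝ) + Pi.single p.1.2 (1 : ℝ))

/-- The positive definite matrix `h_* = Σ_{i=1}^{n_*} ξ_i ⊗ ξ_i`. -/
def hStar (n : ℕ) : Matrix (Fin n) (Fin n) ℝ :=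
  ∑ p : PairIdx n, Matrix.vecMulVec (xiVec p) (xiVec p)
/-- The linear map `Φ_i(α, β) = c_* α ⊙ ξ_i + Σ_{j>n} β_j ξ_j ⊗ ξ_j`, where
`α ⊙ ξ := (1/2)(α ⊗ ξ + ξ ⊗ α)` and the off-diagonal vectors `ξ_j`, `j = n+1, …, n_*`,
are indexed by pairs `p.1 < p.2`. -/
def Phi (n : ℕ) (c : ℝ) (i : Fin n)
    (αβ : (Fin n → ℝ) × ({p : Fin n × Fin n // p.1 < p.2} → ℝ)) :
    Matrix (Fin n) (Fin n) ℝ :=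
  c • ((2 : ℝ)⁻¹ • (Matrix.vecMulVec αβ.1 (Pi.single i 1) +
      Matrix.vecMulVec (Pi.single i 1) αβ.1)) +
    ∑ p : {p : Fin n × Fin n // p.1 < p.2}, αβ.2 p •
      Matrix.vecMulVec (xiVec ⟨p.1, le_of_lt p.2⟩) (xiVec ⟨p.1, le_of_lt p.2⟩)

/-! ### Auxiliary machinery for Statement 9 -/

abbrev OffIdx (n : ℕ) := {p : Fin n × Fin n // p.1 < p.2}

/-- indicator vector -/
def ind {n : ℕ} (a k : Fin n) : ℝ := if k = a then 1 else 0

/-- symmetric elementary matrices -/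
def symmE {n : ℕ} (a b : Fin n) : Matrix (Fin n) (Fin n) ℝ :=
  Matrix.of fun k l => ind a k * ind b l + ind b k * ind a l

lemma symmE_symm_arg {n : ℕ} (a b : Fin n) : symmE a b = symmE b a := by
  ext k l; simp [symmE]; ring

lemma xi_off {n : ℕ} (q : OffIdx n) (k : Fin n) :
    xiVec ⟨q.1, le_of_lt q.2⟩ k =
      (Real.sqrt 2)⁻¹ * ((if k = q.1.1 then (1:ℝ) else 0) + (if k = q.1.2 then 1 else 0)) := by
  have h : ¬ ((q.1.1 : Fin n) = q.1.2) := ne_of_lt q.2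
  simp [xiVec, h, Pi.single_apply]

lemma xi_mul {n : ℕ} (q : OffIdx n) (k l : Fin n) :
    xiVec ⟨q.1, le_of_lt q.2⟩ k * xiVec ⟨q.1, le_of_lt q.2⟩ l =
      2⁻¹ * (((if k = q.1.1 then (1:ℝ) else 0) + (if k = q.1.2 then 1 else 0)) *
        ((if l = q.1.1 then (1:ℝ) else 0) + (if l = q.1.2 then 1 else 0))) := by
  rw [xi_off, xi_off]
  ring_nf
  rw [← Real.sqrt_inv, Real.sq_sqrt (by norm_num)]
  ring

lemma Phi_apply (n : ℕ) (c : ℝ) (i : Fin n) (αβ : (Fin n → ℝ) × (OffIdx n → ℝ)) (k l : Fin n) :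
    Phi n c i αβ k l = c * 2⁻¹ * (αβ.1 k * (if l = i then 1 else 0) + (if k = i then 1 else 0) * αβ.1 l)
      + ∑ p : OffIdx n, αβ.2 p *
          (xiVec ⟨p.1, le_of_lt p.2⟩ k * xiVec ⟨p.1, le_of_lt p.2⟩ l) := by
  simp [Phi, Matrix.sum_apply, Matrix.vecMulVec_apply, Pi.single_apply, mul_assoc]
  split_ifs <;> ring

lemma phi_linear (n : ℕ) (c : ℝ) (i : Fin n) : IsLinearMap ℝ (Phi n c i) := by
  constructor
  · intro x y
    ext k l
    simp only [Matrix.add_apply, Phi_apply, Prod.fst_add, Prod.snd_add, Pi.add_apply, add_mul]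
    rw [Finset.sum_add_distrib]
    ring
  · intro t x
    ext k l
    simp only [Matrix.smul_apply, Phi_apply, Prod.smul_fst, Prod.smul_snd, Pi.smul_apply,
      smul_eq_mul]
    rw [mul_add t, Finset.mul_sum]
    congr 1
    · ring
    · exact Finset.sum_congr rfl fun p _ => by ring

lemma ind_vanish {n : ℕ} (p : OffIdx n) (k l : Fin n) (hkl : k < l)
    (hne : ¬(p.1.1 = k ∧ p.1.2 = l)) :
    ((if k = p.1.1 then (1:ℝ) else 0) + (if k = p.1.2 then 1 else 0)) *
    ((if l = p.1.1 then (1:ℝ) else 0) + (if l = p.1.2 then 1 else 0)) = 0 := by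
  have hp := p.2
  split_ifs <;> (try ring) <;> exfalso <;>
    simp only [Fin.ext_iff, Fin.lt_def, eq_comm, not_and] at * <;> omega

lemma phi_zero {n : ℕ} {c : ℝ} (hc : c ≠ 0) (i : Fin n)
    (x : (Fin n → ℝ) × (OffIdx n → ℝ)) (h : Phi n c i x = 0) : x = 0 := by
  have H : ∀ k l, Phi n c i x k l = 0 := fun k l => by rw [h]; rfl
  have hA : ∀ q : OffIdx n, q.1.1 ≠ i → q.1.2 ≠ i → x.2 q = 0 := by
    intro q h1 h2
    have hH := H q.1.1 q.1.2
    rw [Phi_apply, Finset.sum_eq_single q] at hH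
    · rw [xi_mul] at hH
      have hne := ne_of_lt q.2
      simp [h1, h2, hne, Ne.symm hne] at hH
      linarith
    · intro p _ hpq
      rw [xi_mul, ind_vanish p _ _ q.2 (by
        intro ⟨e1, e2⟩; exact hpq (Subtype.ext (Prod.ext e1 e2)))]
      ring
    · simp
  have hB : ∀ q : OffIdx n, x.2 q = 0 := by
    intro q
    have hqlt := q.2
    by_cases h1 : q.1.1 = i
    · have hk : q.1.2 ≠ i := fun e => (ne_of_lt q.2) (h1.trans e.symm)
      have hH := H q.1.2 q.1.2
      rw [Phi_apply, Finset.sum_eq_single q] at hH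
      · rw [xi_mul] at hH
        have hne := ne_of_lt q.2
        simp [hk, Ne.symm hne] at hH
        linarith
      · intro p _ hpq
        by_cases hp1 : p.1.1 = i
        · rw [xi_mul]
          have hk1 : ¬ (q.1.2 = p.1.1) := fun e => hk (e.trans hp1)
          have hk2 : ¬ (q.1.2 = p.1.2) := fun e =>
            hpq (Subtype.ext (Prod.ext (hp1.trans h1.symm) e.symm))
          simp [hk1, hk2]
        · by_cases hp2 : p.1.2 = i
          · rw [xi_mul]
            have hk1 : ¬ (q.1.2 = p.1.1) := by
              intro e
              have : (i : Fin n) < i := by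
                calc i = q.1.1 := h1.symm
                _ < q.1.2 := q.2
                _ = p.1.1 := e
                _ < p.1.2 := p.2
                _ = i := hp2
              exact lt_irrefl _ this
            have hk2 : ¬ (q.1.2 = p.1.2) := fun e => hk (e.trans hp2)
            simp [hk1, hk2]
          · rw [hA p hp1 hp2]; ring
      · simp
    · by_cases h2 : q.1.2 = i
      · have hk : q.1.1 ≠ i := h1
        have hH := H q.1.1 q.1.1
        rw [Phi_apply, Finset.sum_eq_single q] at hH
        · rw [xi_mul] at hH
          have hne := ne_of_lt q.2
          simp [hk, hne] at hH
          linarith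
        · intro p _ hpq
          by_cases hp2 : p.1.2 = i
          · rw [xi_mul]
            have hk2 : ¬ (q.1.1 = p.1.2) := fun e => hk (e.trans hp2)
            have hk1 : ¬ (q.1.1 = p.1.1) := fun e =>
              hpq (Subtype.ext (Prod.ext e.symm (hp2.trans h2.symm)))
            simp [hk1, hk2]
          · by_cases hp1 : p.1.1 = i
            · rw [xi_mul]
              have hk2 : ¬ (q.1.1 = p.1.2) := by
                intro e
                have : (i : Fin n) < i := by
                  calc i = p.1.1 := hp1.symm
                  _ < p.1.2 := p.2
                  _ = q.1.1 := e.symm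
                  _ < q.1.2 := q.2
                  _ = i := h2
                exact lt_irrefl _ this
              have hk1 : ¬ (q.1.1 = p.1.1) := fun e => hk (e.trans hp1)
              simp [hk1, hk2]
            · rw [hA p hp1 hp2]; ring
        · simp
      · exact hA q h1 h2
  have hα : ∀ k, x.1 k = 0 := by
    intro k
    by_cases hk : k = i
    · subst hk
      have hH := H k k
      rw [Phi_apply] at hH
      simp [hB] at hH
      rcases hH with h | h
      · exact absurd h hc
      · exact h
    · have hH := H k i
      rw [Phi_apply] at hH
      simp [hB, hk] at hH
      rcases hH with h | h
      · exact absurd h hc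
      · exact h
  ext k
  · exact hα k
  · exact hB _

lemma sum_decomp {n : ℕ} (A : Matrix (Fin n) (Fin n) ℝ) (hA : A.IsSymm) :
    A = (2:ℝ)⁻¹ • ∑ p : Fin n × Fin n, A p.1 p.2 • symmE p.1 p.2 := by
  ext k l
  simp only [Matrix.smul_apply, Matrix.sum_apply, symmE, Matrix.of_apply, smul_eq_mul]
  have e1 : ∑ p : Fin n × Fin n, A p.1 p.2 * (ind p.1 k * ind p.2 l + ind p.2 k * ind p.1 l)
      = (∑ p : Fin n × Fin n, A p.1 p.2 * (ind p.1 k * ind p.2 l))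
        + ∑ p : Fin n × Fin n, A p.1 p.2 * (ind p.2 k * ind p.1 l) := by
    rw [← Finset.sum_add_distrib]
    exact Finset.sum_congr rfl fun p _ => by ring
  rw [e1, Finset.sum_eq_single (k, l), Finset.sum_eq_single (l, k)]
  · simp [ind]
    have := hA.apply k l
    rw [this]
    ring
  · intro p _ hp
    simp only [ind]
    by_cases h1 : k = p.2
    · by_cases h2 : l = p.1
      · exact absurd (Prod.ext h2.symm h1.symm) hp
      · simp [h2]
    · simp [h1]
  · simp
  · intro p _ hp
    simp only [ind]
    by_cases h1 : k = p.1
    · by_cases h2 : l = p.2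
      · exact absurd (Prod.ext h1.symm h2.symm) hp
      · simp [h2]
    · simp [h1]
  · simp

lemma phi_G1 {n : ℕ} {c : ℝ} (hc : c ≠ 0) (i k : Fin n) :
    Phi n c i (Pi.single k (2/c), 0) = symmE k i := by
  ext a b
  rw [Phi_apply]
  simp only [Pi.zero_apply, zero_mul, Finset.sum_const_zero, add_zero, symmE,
    Matrix.of_apply, ind, Pi.single_apply]
  split_ifs <;> field_simp <;> ring

lemma phi_G2 {n : ℕ} (c : ℝ) (i : Fin n) (q : OffIdx n) :
    Phi n c i (0, Pi.single q 2) =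
      Matrix.of fun k l => (ind q.1.1 k + ind q.1.2 k) * (ind q.1.1 l + ind q.1.2 l) := by
  ext k l
  rw [Phi_apply, Finset.sum_eq_single q]
  · rw [xi_mul]
    simp only [Pi.single_eq_same, Pi.zero_apply, zero_mul, mul_zero, Matrix.of_apply, ind]
    ring
  · intro p _ hpq
    exact mul_eq_zero_of_left (Pi.single_eq_of_ne hpq 2) _
  · simp

/-- Lemma 2.3: `Φ_i` is a linear isomorphism onto `Sym_n`. -/
theorem statement9 (n : ℕ) (hn : 2 ≤ n) (c : ℝ) (hc : c ≠ 0) (i : Fin n) :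
    IsLinearMap ℝ (Phi n c i) ∧ Function.Injective (Phi n c i) ∧
    Set.range (Phi n c i) = {A : Matrix (Fin n) (Fin n) ℝ | A.IsSymm} := by
  have hlin := phi_linear n c i
  refine ⟨hlin, ?_, ?_⟩
  · intro x y hxy
    have h0 : Phi n c i (x - y) = 0 := by
      have := (IsLinearMap.mk' _ hlin).map_sub x y
      simp only [IsLinearMap.mk'_apply] at this
      rw [this, hxy, sub_self]
    have := phi_zero hc i (x - y) h0
    exact sub_eq_zero.mp this
  · ext A
    simp only [Set.mem_range, Set.mem_setOf_eq]
    constructor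
    · rintro ⟨x, rfl⟩
      show Matrix.transpose (Phi n c i x) = Phi n c i x
      ext k l
      rw [Matrix.transpose_apply, Phi_apply, Phi_apply]
      congr 1
      · ring
      · exact Finset.sum_congr rfl fun p _ => by rw [xi_mul, xi_mul]; ring
    · intro hA
      suffices hmem : A ∈ LinearMap.range (IsLinearMap.mk' _ hlin) by
        obtain ⟨x, hx⟩ := hmem
        exact ⟨x, hx⟩
      have hG1 : ∀ k, symmE k i ∈ LinearMap.range (IsLinearMap.mk' _ hlin) :=
        fun k => ⟨(Pi.single k (2/c), 0), phi_G1 hc i k⟩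
      have hG2 : ∀ q : OffIdx n,
          (Matrix.of fun k l => (ind q.1.1 k + ind q.1.2 k) * (ind q.1.1 l + ind q.1.2 l))
            ∈ LinearMap.range (IsLinearMap.mk' _ hlin) :=
        fun q => ⟨(0, Pi.single q 2), phi_G2 c i q⟩
      have hdiag : ∀ a, symmE a a ∈ LinearMap.range (IsLinearMap.mk' _ hlin) := by
        intro a
        by_cases ha : a = i
        · subst ha; exact hG1 a
        · rcases lt_or_gt_of_ne ha with h | h
          · set q : OffIdx n := ⟨(a, i), h⟩ with hq
            have key : symmE a a = ((2:ℝ) •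
                (Matrix.of fun k l => (ind q.1.1 k + ind q.1.2 k) * (ind q.1.1 l + ind q.1.2 l))
                - (2:ℝ) • symmE a i) - symmE i i := by
              ext k l
              simp only [Matrix.sub_apply, Matrix.smul_apply, Matrix.of_apply, symmE,
                smul_eq_mul, hq]
              ring
            rw [key]
            exact Submodule.sub_mem _ (Submodule.sub_mem _
              (Submodule.smul_mem _ _ (hG2 q)) (Submodule.smul_mem _ _ (hG1 a))) (hG1 i)
          · set q : OffIdx n := ⟨(i, a), h⟩ with hq
            have key : symmE a a = ((2:ℝ) •
                (Matrix.of fun k l => (ind q.1.1 k + ind q.1.2 k) * (ind q.1.1 l + ind q.1.2 l))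
                - (2:ℝ) • symmE a i) - symmE i i := by
              ext k l
              simp only [Matrix.sub_apply, Matrix.smul_apply, Matrix.of_apply, symmE,
                smul_eq_mul, hq]
              ring
            rw [key]
            exact Submodule.sub_mem _ (Submodule.sub_mem _
              (Submodule.smul_mem _ _ (hG2 q)) (Submodule.smul_mem _ _ (hG1 a))) (hG1 i)
      have hSall : ∀ a b, symmE a b ∈ LinearMap.range (IsLinearMap.mk' _ hlin) := by
        intro a b
        by_cases hab : a = b
        · subst hab; exact hdiag a
        · by_cases ha : a = i
          · subst ha; rw [symmE_symm_arg]; exact hG1 b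
          · by_cases hb : b = i
            · subst hb; exact hG1 a
            · rcases lt_or_gt_of_ne hab with h | h
              · set q : OffIdx n := ⟨(a, b), h⟩ with hq
                have key : symmE a b =
                    ((Matrix.of fun k l => (ind q.1.1 k + ind q.1.2 k) * (ind q.1.1 l + ind q.1.2 l))
                    - (2:ℝ)⁻¹ • symmE a a) - (2:ℝ)⁻¹ • symmE b b := by
                  ext k l
                  simp only [Matrix.sub_apply, Matrix.smul_apply, Matrix.of_apply, symmE,
                    smul_eq_mul, hq]
                  ring
                rw [key]
                exact Submodule.sub_mem _ (Submodule.sub_mem _ (hG2 q)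
                  (Submodule.smul_mem _ _ (hdiag a))) (Submodule.smul_mem _ _ (hdiag b))
              · set q : OffIdx n := ⟨(b, a), h⟩ with hq
                have key : symmE a b =
                    ((Matrix.of fun k l => (ind q.1.1 k + ind q.1.2 k) * (ind q.1.1 l + ind q.1.2 l))
                    - (2:ℝ)⁻¹ • symmE a a) - (2:ℝ)⁻¹ • symmE b b := by
                  ext k l
                  simp only [Matrix.sub_apply, Matrix.smul_apply, Matrix.of_apply, symmE,
                    smul_eq_mul, hq]
                  ring
                rw [key]
                exact Submodule.sub_mem _ (Submodule.sub_mem _ (hG2 q)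
                  (Submodule.smul_mem _ _ (hdiag a))) (Submodule.smul_mem _ _ (hdiag b))
      rw [sum_decomp A hA]
      exact Submodule.smul_mem _ _ (Submodule.sum_mem _ fun p _ =>
        Submodule.smul_mem _ _ (hSall p.1 p.2))
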